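/- For every x > 0, ψ₂(x) + ψ₁(x)² > 0. -/

import Mathlib

open Real Set Filter Topology

/-- The polygamma function `ψₙ`: the `(n+1)`-st derivative of `log ∘ Γ`. -/
noncomputable def polygamma (n : ℕ) (x : ℝ) : ℝ :=
  iteratedDeriv (n + 1) (fun y => Real.log (Real.Gamma y)) x


noncomputable def lG : ℝ → ℝ := fun y => Real.log (Real.Gamma y)

lemma contDiffOn_lG : ContDiffOn ℝ ⊤ lG (Ioi 0) := by
  intro x hx
  have hx : (0:ℝ) < x := hx
  have hA : AnalyticAt ℂ Complex.Gamma (x : ℂ) := by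
    apply Complex.analyticAt_iff_eventually_differentiableAt.mpr
    have hopen : IsOpen {z : ℂ | 0 < z.re} := isOpen_lt continuous_const Complex.continuous_re
    filter_upwards [hopen.mem_nhds (by simpa using hx)] with z hz
    refine Complex.differentiableAt_Gamma z (fun m => ?_)
    intro h
    rw [h] at hz
    simp only [mem_setOf_eq, Complex.neg_re, Complex.natCast_re] at hz
    have : (0:ℝ) ≤ (m:ℝ) := m.cast_nonneg
    linarith
  have hGr : AnalyticAt ℝ Real.Gamma x := by
    have h1 : AnalyticAt ℝ (fun y : ℝ => (y : ℂ)) x := Complex.ofRealCLM.analyticAt x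
    have h2 : AnalyticAt ℝ (fun z : ℂ => z.re) ((Complex.Gamma ∘ Complex.ofReal) x) :=
      Complex.reCLM.analyticAt _
    have h3 : AnalyticAt ℝ ((fun z : ℂ => z.re) ∘ (Complex.Gamma ∘ Complex.ofReal)) x :=
      h2.comp (hA.restrictScalars.comp h1)
    refine h3.congr ?_
    filter_upwards with y
    show (Complex.Gamma (y : ℂ)).re = Real.Gamma y
    rw [Complex.Gamma_ofReal, Complex.ofReal_re]
  have hG : ContDiffAt ℝ ⊤ Real.Gamma x := hGr.contDiffAt
  have hlog : ContDiffAt ℝ ⊤ Real.log (Real.Gamma x) :=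
    Real.contDiffAt_log.mpr (Real.Gamma_pos_of_pos hx).ne'
  exact (hlog.comp x hG).contDiffWithinAt

noncomputable def p0 : ℝ → ℝ := deriv lG
noncomputable def p1 : ℝ → ℝ := deriv p0
noncomputable def p2 : ℝ → ℝ := deriv p1

lemma contDiffOn_p0 : ContDiffOn ℝ ⊤ p0 (Ioi 0) :=
  contDiffOn_lG.deriv_of_isOpen isOpen_Ioi le_top

lemma contDiffOn_p1 : ContDiffOn ℝ ⊤ p1 (Ioi 0) :=
  contDiffOn_p0.deriv_of_isOpen isOpen_Ioi le_top

lemma diff_lG {x : ℝ} (hx : 0 < x) : DifferentiableAt ℝ lG x :=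
  (contDiffOn_lG.contDiffAt (isOpen_Ioi.mem_nhds hx)).differentiableAt (by simp)

lemma diff_p0 {x : ℝ} (hx : 0 < x) : DifferentiableAt ℝ p0 x :=
  (contDiffOn_p0.contDiffAt (isOpen_Ioi.mem_nhds hx)).differentiableAt (by simp)

lemma diff_p1 {x : ℝ} (hx : 0 < x) : DifferentiableAt ℝ p1 x :=
  (contDiffOn_p1.contDiffAt (isOpen_Ioi.mem_nhds hx)).differentiableAt (by simp)

lemma lG_rec {x : ℝ} (hx : 0 < x) : lG (x + 1) = lG x + Real.log x := by
  simp only [lG, Real.Gamma_add_one hx.ne',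
    Real.log_mul hx.ne' (Real.Gamma_pos_of_pos hx).ne', add_comm]

lemma p0_rec {x : ℝ} (hx : 0 < x) : p0 (x + 1) = p0 x + 1 / x := by
  rw [p0, ← deriv_comp_add_const, one_div, ← Real.deriv_log,
    ← deriv_add (diff_lG hx) (Real.differentiableAt_log hx.ne')]
  apply EventuallyEq.deriv_eq
  filter_upwards [eventually_gt_nhds hx] with y hy
  exact lG_rec hy

lemma p1_rec {x : ℝ} (hx : 0 < x) : p1 (x + 1) = p1 x - 1 / x ^ 2 := by
  have hinv : deriv (fun y : ℝ => 1 / y) x = -(1 / x ^ 2) := by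
    simp [one_div, deriv_inv]
  rw [p1, ← deriv_comp_add_const, sub_eq_add_neg, ← hinv,
    ← deriv_add (diff_p0 hx) ?hdiff]
  case hdiff =>
    simp only [one_div]
    exact differentiableAt_inv hx.ne'
  apply EventuallyEq.deriv_eq
  filter_upwards [eventually_gt_nhds hx] with y hy
  exact p0_rec hy

lemma convexOn_lG : ConvexOn ℝ (Ioi 0) lG := Real.convexOn_log_Gamma

lemma p0_mono {a b : ℝ} (ha : 0 < a) (hab : a ≤ b) : p0 a ≤ p0 b := by
  rcases eq_or_lt_of_le hab with rfl | h
  · exact le_refl _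
  · have hb : 0 < b := lt_trans ha h
    exact (convexOn_lG.deriv_le_slope (mem_Ioi.mpr ha) (mem_Ioi.mpr hb) h (diff_lG ha)).trans
      (convexOn_lG.slope_le_deriv (mem_Ioi.mpr ha) (mem_Ioi.mpr hb) h (diff_lG hb))

lemma p0_le_log {x : ℝ} (hx : 0 < x) : p0 x ≤ Real.log x := by
  have h := convexOn_lG.deriv_le_slope (mem_Ioi.mpr hx) (mem_Ioi.mpr (by linarith : (0:ℝ) < x + 1))
    (by linarith) (diff_lG hx)
  rwa [slope_def_field, lG_rec hx, add_sub_cancel_left, add_sub_cancel_left, div_one] at h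

lemma log_le_p0 {x : ℝ} (hx : 0 < x) : Real.log x ≤ p0 (x + 1) := by
  have h := convexOn_lG.slope_le_deriv (mem_Ioi.mpr hx) (mem_Ioi.mpr (by linarith : (0:ℝ) < x + 1))
    (by linarith) (diff_lG (by linarith))
  rwa [slope_def_field, lG_rec hx, add_sub_cancel_left, add_sub_cancel_left, div_one] at h

noncomputable def Sf (x : ℝ) : ℝ := ∑' k : ℕ, 1 / (x + k) ^ 2
noncomputable def Tf (x : ℝ) : ℝ := ∑' k : ℕ, 1 / (x + k) ^ 3
noncomputable def Uf (x : ℝ) : ℝ := ∑' k : ℕ, 1 / (x + k) ^ 4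

lemma summable_S {x : ℝ} (hx : 0 < x) : Summable (fun k : ℕ => 1 / (x + k) ^ 2) := by
  refine (summable_nat_add_iff 1).mp ?_
  have hbase : Summable (fun k : ℕ => 1 / ((k:ℝ) + 1) ^ 2) := by
    have := (summable_nat_add_iff 1).mpr
      (Real.summable_one_div_nat_pow.mpr (by norm_num : 1 < 2))
    exact this.congr fun k => by push_cast; ring_nf
  refine Summable.of_nonneg_of_le (fun k => by positivity) (fun k => ?_) hbase
  have hk : (0:ℝ) < (k:ℝ) + 1 := by positivity
  have h2 : ((k:ℝ) + 1) ^ 2 ≤ (x + (↑(k + 1) : ℝ)) ^ 2 := by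
    have : ((k:ℝ)+1) ≤ x + (↑(k+1):ℝ) := by push_cast; linarith
    nlinarith
  exact one_div_le_one_div_of_le (by positivity) h2

lemma summable_aux_div {x : ℝ} (hx : 0 < x) {g : ℕ → ℝ}
    (hg1 : ∀ k, 0 ≤ g k) (hg2 : ∀ k : ℕ, g k ≤ (1/x) * (1 / (x + k) ^ 2)) : Summable g :=
  Summable.of_nonneg_of_le hg1 hg2 ((summable_S hx).mul_left _)

lemma summable_T {x : ℝ} (hx : 0 < x) : Summable (fun k : ℕ => 1 / (x + k) ^ 3) := by
  refine summable_aux_div hx (fun k => by positivity) (fun k => ?_)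
  have hxk : (0:ℝ) < x + k := by positivity
  rw [div_mul_div_comm, one_mul]
  refine one_div_le_one_div_of_le (by positivity) ?_
  have h1 : x ≤ x + (k:ℝ) := le_add_of_nonneg_right (Nat.cast_nonneg k)
  calc x * (x+(k:ℝ))^2 ≤ (x+(k:ℝ)) * (x+(k:ℝ))^2 :=
        mul_le_mul_of_nonneg_right h1 (pow_pos hxk 2).le
  _ = (x+(k:ℝ))^3 := by ring

lemma summable_U {x : ℝ} (hx : 0 < x) : Summable (fun k : ℕ => 1 / (x + k) ^ 4) := by
  have hT := summable_T hx
  refine Summable.of_nonneg_of_le (fun k => by positivity) (fun k => ?_) (hT.mul_left (1/x))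
  have hxk : (0:ℝ) < x + k := by positivity
  rw [div_mul_div_comm, one_mul]
  refine one_div_le_one_div_of_le (by positivity) ?_
  have h1 : x ≤ x + (k:ℝ) := le_add_of_nonneg_right (Nat.cast_nonneg k)
  calc x * (x+(k:ℝ))^3 ≤ (x+(k:ℝ)) * (x+(k:ℝ))^3 :=
        mul_le_mul_of_nonneg_right h1 (pow_pos hxk 3).le
  _ = (x+(k:ℝ))^4 := by ring

lemma tendsto_inv_shift (y : ℝ) : Tendsto (fun n : ℕ => 1 / (y + n)) atTop (𝓝 0) := by
  simp only [one_div]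
  exact Tendsto.comp tendsto_inv_atTop_zero
    (tendsto_atTop_add_const_left atTop y tendsto_natCast_atTop_atTop)

lemma hasSum_telescope {g : ℕ → ℝ} (h0 : ∀ k, g (k + 1) ≤ g k)
    (hlim : Tendsto g atTop (𝓝 0)) : HasSum (fun k => g k - g (k + 1)) (g 0) := by
  refine (hasSum_iff_tendsto_nat_of_nonneg (fun k => sub_nonneg.mpr (h0 k)) _).mpr ?_
  have h : ∀ n, ∑ i ∈ Finset.range n, (g i - g (i + 1)) = g 0 - g n :=
    fun n => Finset.sum_range_sub' g n
  simp_rw [h]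
  simpa using tendsto_const_nhds.sub hlim

lemma S_rec {x : ℝ} (hx : 0 < x) : Sf x = 1 / x ^ 2 + Sf (x + 1) := by
  rw [Sf, Summable.tsum_eq_zero_add (summable_S hx)]
  norm_num
  congr 1
  funext k
  push_cast
  ring_nf

lemma T_rec {x : ℝ} (hx : 0 < x) : Tf x = 1 / x ^ 3 + Tf (x + 1) := by
  rw [Tf, Summable.tsum_eq_zero_add (summable_T hx)]
  norm_num
  congr 1
  funext k
  push_cast
  ring_nf

lemma S_nonneg {x : ℝ} (hx : 0 < x) : 0 ≤ Sf x :=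
  tsum_nonneg (fun k => by positivity)

lemma T_nonneg {x : ℝ} (hx : 0 < x) : 0 ≤ Tf x :=
  tsum_nonneg (fun k => by positivity)

lemma S_upper {y : ℝ} (hy : 0 < y) : Sf (y + 1) ≤ 1 / y := by
  have htel : HasSum (fun k : ℕ => 1 / (y + k) - 1 / (y + (k + 1))) (1 / y) := by
    have := hasSum_telescope (g := fun k : ℕ => 1 / (y + k))
      (fun k => by
        have h1 : (0:ℝ) < y + k := by positivity
        have h2 : y + (k:ℝ) ≤ y + ((k:ℝ) + 1) := by linarith
        push_cast
        exact one_div_le_one_div_of_le h1 h2) (tendsto_inv_shift y)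
    simpa using this
  refine hasSum_le (fun k => ?_) (summable_S (by positivity)).hasSum htel
  have h1 : (0:ℝ) < y + k := by positivity
  have heq : 1 / (y + (k:ℝ)) - 1 / (y + ((k:ℝ) + 1)) = 1 / ((y + k) * (y + k + 1)) := by
    rw [div_sub_div _ _ (by positivity : y + (k:ℝ) ≠ 0) (by positivity : y + ((k:ℝ)+1) ≠ 0),
      div_eq_div_iff (by positivity) (by positivity)]
    ring
  push_cast
  rw [heq]
  refine one_div_le_one_div_of_le (by positivity) ?_
  nlinarith

lemma S_lower {y : ℝ} (hy : 0 < y) : 1 / y + 1 / (2 * y ^ 2) ≤ Sf y := by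
  have htel : HasSum (fun k : ℕ =>
      (1 / (y + k) + 1 / (2 * (y + k) ^ 2)) - (1 / (y + (k + 1)) + 1 / (2 * (y + (k + 1)) ^ 2)))
      (1 / y + 1 / (2 * y ^ 2)) := by
    have := hasSum_telescope (g := fun k : ℕ => 1 / (y + k) + 1 / (2 * (y + k) ^ 2))
      (fun k => by
        have h1 : (0:ℝ) < y + k := by positivity
        have h2 : y + (k:ℝ) ≤ y + ((k:ℝ) + 1) := by linarith
        push_cast
        have := one_div_le_one_div_of_le h1 h2
        have h3 : (0:ℝ) < 2 * (y + (k:ℝ)) ^ 2 := by positivity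
        have h4 : 2 * (y + (k:ℝ)) ^ 2 ≤ 2 * (y + ((k:ℝ) + 1)) ^ 2 := by nlinarith
        have := one_div_le_one_div_of_le h3 h4
        linarith)
      (by
        have h1 := tendsto_inv_shift y
        have h2 : Tendsto (fun n : ℕ => 1 / (2 * (y + n) ^ 2)) atTop (𝓝 0) := by
          have hsq : Tendsto (fun n : ℕ => (1 / (y + n)) * (1 / (y + n))) atTop (𝓝 0) := by
            simpa using h1.mul h1
          have hid : ∀ a : ℝ, (1/2) * (1/a * (1/a)) = 1/(2*a^2) := fun a => by
            rw [one_div, one_div, one_div, ← mul_inv, ← mul_inv]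
            congr 1
            ring
          have h3 : Tendsto (fun n : ℕ => (1/2 : ℝ) * (1 / (y + n) * (1 / (y + n))))
              atTop (𝓝 0) := by simpa using (h1.mul h1).const_mul (1/2 : ℝ)
          simpa only [hid] using h3
        simpa using h1.add h2)
    simpa using this
  refine hasSum_le (fun k => ?_) htel (summable_S hy).hasSum
  have h1 : (0:ℝ) < y + k := by positivity
  have h2 : (0:ℝ) < y + (k:ℝ) + 1 := by linarith
  push_cast
  have key : 1 / (y + (k:ℝ)) ^ 2 -
      ((1 / (y + k) + 1 / (2 * (y + k) ^ 2)) - (1 / (y + (k + 1)) + 1 / (2 * (y + (k + 1)) ^ 2)))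
      = 1 / (2 * (y + k) ^ 2 * (y + k + 1) ^ 2) := by
    field_simp
    ring
  nlinarith [key, sq_nonneg (y + (k:ℝ)), one_div_pos.mpr (mul_pos (mul_pos two_pos (pow_pos h1 2)) (pow_pos h2 2))]

lemma T_upper {y : ℝ} (hy : 0 < y) : Tf y ≤ (1 / y) * Sf y := by
  rw [Tf, Sf, ← tsum_mul_left]
  refine Summable.tsum_le_tsum (fun k => ?_) (summable_T hy) ((summable_S hy).mul_left _)
  have hxk : (0:ℝ) < y + k := by positivity
  rw [div_mul_div_comm, one_mul]
  refine one_div_le_one_div_of_le (by positivity) ?_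
  have h1 : y ≤ y + (k:ℝ) := le_add_of_nonneg_right (Nat.cast_nonneg k)
  calc y * (y+(k:ℝ))^2 ≤ (y+(k:ℝ)) * (y+(k:ℝ))^2 :=
        mul_le_mul_of_nonneg_right h1 (pow_pos hxk 2).le
  _ = (y+(k:ℝ))^3 := by ring

noncomputable def Ff (x : ℝ) : ℝ := Sf x ^ 2 - 2 * Tf x

lemma F_step {y : ℝ} (hy : 0 < y) : Ff (y + 1) < Ff y := by
  have hy1 : (0:ℝ) < y + 1 := by linarith
  have ha : (2*y+3)/(2*(y+1)^2) ≤ Sf (y+1) := by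
    refine le_trans (le_of_eq ?_) (S_lower hy1)
    field_simp
    ring
  have key : 2*(1/y^2)*((2*y+3)/(2*(y+1)^2)) + 1/y^4 - 2/y^3 = 1/(y^4*(y+1)^2) := by
    field_simp
    ring
  have hexp : Ff y = (1/y^2 + Sf (y+1))^2 - 2*(1/y^3 + Tf (y+1)) := by
    rw [Ff, S_rec hy, T_rec hy]
  have hdiff : Ff y - Ff (y+1) = 1/y^4 + 2*(1/y^2)*Sf (y+1) - 2/y^3 := by
    rw [hexp, Ff]
    ring
  have hpos : (0:ℝ) < 1/(y^4*(y+1)^2) := by positivity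
  have h2 : 2*(1/y^2)*((2*y+3)/(2*(y+1)^2)) ≤ 2*(1/y^2)*Sf (y+1) :=
    mul_le_mul_of_nonneg_left ha (by positivity)
  linarith

lemma F_tendsto {x : ℝ} (hx : 0 < x) : Tendsto (fun n : ℕ => Ff (x+1+n)) atTop (𝓝 0) := by
  have hSlim : Tendsto (fun n : ℕ => Sf (x+1+n)) atTop (𝓝 0) := by
    refine squeeze_zero (fun n => S_nonneg (by positivity)) (fun n => ?_) (tendsto_inv_shift x)
    have h : x+1+(n:ℝ) = (x+(n:ℝ))+1 := by ring
    rw [h]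
    exact S_upper (by positivity)
  have hTlim : Tendsto (fun n : ℕ => Tf (x+1+n)) atTop (𝓝 0) := by
    refine squeeze_zero (fun n => T_nonneg (by positivity)) (fun n => ?_) hSlim
    have hy : (0:ℝ) < x+1+n := by positivity
    calc Tf (x+1+n) ≤ (1/(x+1+n)) * Sf (x+1+n) := T_upper hy
    _ ≤ 1 * Sf (x+1+n) := by
        refine mul_le_mul_of_nonneg_right ?_ (S_nonneg hy)
        rw [div_le_one hy]
        have : (0:ℝ) ≤ (n:ℝ) := Nat.cast_nonneg n
        linarith
    _ = Sf (x+1+n) := one_mul _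
  have hfun : (fun n : ℕ => Ff (x+1+n)) =
      fun n : ℕ => Sf (x+1+n) * Sf (x+1+n) - 2 * Tf (x+1+n) := by
    funext n
    rw [Ff]
    ring
  rw [hfun]
  simpa using (hSlim.mul hSlim).sub (hTlim.const_mul 2)

lemma F_pos {x : ℝ} (hx : 0 < x) : 0 < Ff x := by
  have hmono : ∀ n : ℕ, Ff (x+1+n) ≤ Ff (x+1) := by
    intro n
    induction n with
    | zero => simp
    | succ n ih =>
      refine le_trans (le_of_lt ?_) ih
      have hstep := F_step (y := x+1+n) (by positivity)
      have h : x+1+((n:ℝ)+1) = (x+1+(n:ℝ))+1 := by ring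
      rw [show ((n+1 : ℕ) : ℝ) = (n:ℝ)+1 from by push_cast; ring, h]
      exact hstep
  have h0 : 0 ≤ Ff (x+1) := le_of_tendsto (F_tendsto hx) (Eventually.of_forall hmono)
  have := F_step hx
  linarith

lemma p0_shift {x : ℝ} (hx : 0 < x) (n : ℕ) :
    p0 (x + n) = p0 x + ∑ k ∈ Finset.range n, 1 / (x + k) := by
  induction n with
  | zero => simp
  | succ n ih =>
    have h1 : x + ((n:ℝ) + 1) = (x + n) + 1 := by ring
    rw [Nat.cast_succ, h1, p0_rec (by positivity), ih, Finset.sum_range_succ]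
    ring

lemma hasSum_p0_diff {x h : ℝ} (hx : 0 < x) (hh : 0 < h) :
    HasSum (fun k : ℕ => 1 / (x + k) - 1 / (x + h + k)) (p0 (x + h) - p0 x) := by
  have hnonneg : ∀ k : ℕ, 0 ≤ 1 / (x + k) - 1 / (x + h + k) := by
    intro k
    have h1 : (0:ℝ) < x + k := by positivity
    have h2 : x + (k:ℝ) ≤ x + h + k := by linarith
    have := one_div_le_one_div_of_le h1 h2
    linarith
  refine (hasSum_iff_tendsto_nat_of_nonneg hnonneg _).mpr ?_
  have hps : ∀ n : ℕ, ∑ k ∈ Finset.range n, (1 / (x + k) - 1 / (x + h + k)) =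
      (p0 (x + h) - p0 x) - (p0 (x + h + n) - p0 (x + n)) := by
    intro n
    rw [Finset.sum_sub_distrib]
    have e1 := p0_shift hx n
    have e2 := p0_shift (x := x + h) (by positivity) n
    rw [e1, e2]
    ring
  simp only [hps]
  have herr : Tendsto (fun n : ℕ => p0 (x + h + n) - p0 (x + n)) atTop (𝓝 0) := by
    apply squeeze_zero' (g := fun n : ℕ => (h + 1) * (1 / ((x - 1) + n)))
    · filter_upwards with n
      have h1 : (0:ℝ) < x + n := by positivity
      exact sub_nonneg.mpr (p0_mono h1 (by linarith))
    · filter_upwards [eventually_ge_atTop 1] with n hn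
      have hn1 : (1:ℝ) ≤ (n:ℝ) := by exact_mod_cast hn
      have hxn1 : (0:ℝ) < x + n - 1 := by linarith
      have hub : p0 (x + h + n) ≤ Real.log (x + h + n) := p0_le_log (by positivity)
      have hlb : Real.log (x + n - 1) ≤ p0 (x + n) := by
        have := log_le_p0 (x := x + n - 1) hxn1
        rwa [show x + (n:ℝ) - 1 + 1 = x + n from by ring] at this
      have hlog : Real.log (x + h + n) - Real.log (x + n - 1) ≤ (h + 1) / (x + n - 1) := by
        rw [← Real.log_div (by positivity) (by positivity)]
        have := Real.log_le_sub_one_of_pos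
          (x := (x + h + n) / (x + n - 1)) (by positivity)
        have heq : (x + h + (n:ℝ)) / (x + n - 1) - 1 = (h + 1) / (x + n - 1) := by
          field_simp
          ring
        linarith
      have : p0 (x + h + n) - p0 (x + n) ≤ (h + 1) / (x + n - 1) := by linarith
      calc p0 (x + h + n) - p0 (x + n) ≤ (h + 1) / (x + n - 1) := this
      _ = (h + 1) * (1 / ((x - 1) + n)) := by rw [mul_one_div]; ring_nf
    · simpa using (tendsto_inv_shift (x - 1)).const_mul (h + 1)
  simpa using tendsto_const_nhds.sub herr

lemma p0_slope {x h : ℝ} (hx : 0 < x) (hh : 0 < h) :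
    (p0 (x + h) - p0 x) / h = ∑' k : ℕ, 1 / ((x + k) * (x + h + k)) := by
  have heq : ∀ k : ℕ, 1 / (x + k) - 1 / (x + h + k) = h * (1 / ((x + k) * (x + h + k))) := by
    intro k
    have h1 : (0:ℝ) < x + k := by positivity
    have h2 : (0:ℝ) < x + h + k := by positivity
    field_simp
    ring
  have hs := hasSum_p0_diff hx hh
  rw [funext heq] at hs
  have : p0 (x + h) - p0 x = h * ∑' k : ℕ, 1 / ((x + k) * (x + h + k)) := by
    rw [← tsum_mul_left]
    exact hs.tsum_eq.symm
  rw [this, mul_div_cancel_left₀ _ hh.ne']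

lemma tendsto_slope_p0 {x : ℝ} (hx : 0 < x) :
    Tendsto (slope p0 x) (𝓝[>] x) (𝓝 (p1 x)) := by
  have h := (diff_p0 hx).hasDerivAt
  rw [hasDerivAt_iff_tendsto_slope] at h
  exact h.mono_left (nhdsWithin_mono x (fun y hy => ne_of_gt hy))

lemma p1_le_S {x : ℝ} (hx : 0 < x) : p1 x ≤ Sf x := by
  refine le_of_tendsto (tendsto_slope_p0 hx) ?_
  filter_upwards [self_mem_nhdsWithin] with y hy
  have hy' : x < y := hy
  have hh : 0 < y - x := by linarith
  obtain ⟨h, rfl⟩ : ∃ h, y = x + h := ⟨y - x, by ring⟩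
  have hh : 0 < h := by linarith
  rw [slope_def_field, add_sub_cancel_left, p0_slope hx hh]
  have hterm : ∀ k : ℕ, 1 / ((x + k) * (x + h + k)) ≤ 1 / (x + k) ^ 2 := by
    intro k
    have h1 : (0:ℝ) < x + k := by positivity
    refine one_div_le_one_div_of_le (by positivity) ?_
    rw [pow_two]
    exact mul_le_mul_of_nonneg_left (by linarith) h1.le
  refine Summable.tsum_le_tsum hterm ?_ (summable_S hx)
  exact Summable.of_nonneg_of_le (fun k => by positivity) hterm (summable_S hx)

lemma p1_nonneg {x : ℝ} (hx : 0 < x) : 0 ≤ p1 x := by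
  refine ge_of_tendsto (tendsto_slope_p0 hx) ?_
  filter_upwards [self_mem_nhdsWithin] with y hy
  have hy' : x < y := hy
  rw [slope_def_field]
  apply div_nonneg _ (by linarith)
  exact sub_nonneg.mpr (p0_mono hx (by linarith))

lemma p1_shift {x : ℝ} (hx : 0 < x) (n : ℕ) :
    p1 (x + n) = p1 x - ∑ k ∈ Finset.range n, 1 / (x + k) ^ 2 := by
  induction n with
  | zero => simp
  | succ n ih =>
    have h1 : x + ((n:ℝ) + 1) = (x + n) + 1 := by ring
    rw [Nat.cast_succ, h1, p1_rec (by positivity), ih, Finset.sum_range_succ]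
    ring

lemma p1_eq_S {x : ℝ} (hx : 0 < x) : p1 x = Sf x := by
  refine le_antisymm (p1_le_S hx) ?_
  have hps : Tendsto (fun n : ℕ => ∑ k ∈ Finset.range n, 1 / (x + k) ^ 2) atTop (𝓝 (Sf x)) :=
    (summable_S hx).hasSum.tendsto_sum_nat
  refine le_of_tendsto hps ?_
  filter_upwards with n
  have h := p1_shift hx n
  have h2 : 0 ≤ p1 (x + n) := p1_nonneg (by positivity)
  linarith

lemma S_sub_S {x h : ℝ} (hx : 0 < x) (hh : 0 < h) :
    (Sf (x + h) - Sf x) / h = -∑' k : ℕ, (2 * (x + k) + h) / ((x + k) ^ 2 * (x + h + k) ^ 2) := by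
  have hsummg : Summable (fun k : ℕ => (2 * (x + k) + h) / ((x + k) ^ 2 * (x + h + k) ^ 2)) := by
    refine Summable.of_nonneg_of_le (fun k => by positivity) (fun k => ?_)
      (((summable_T hx).mul_left 2).add ((summable_U hx).mul_left h))
    have h1 : (0:ℝ) < x + k := by positivity
    have h2 : (x + (k:ℝ)) ^ 2 ≤ (x + h + k) ^ 2 := by nlinarith
    calc (2 * (x + k) + h) / ((x + k) ^ 2 * (x + h + k) ^ 2)
        ≤ (2 * (x + k) + h) / ((x + k) ^ 2 * (x + k) ^ 2) := by
          refine div_le_div_of_nonneg_left (by positivity) (by positivity) ?_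
          exact mul_le_mul_of_nonneg_left h2 (by positivity)
      _ = 2 * (1 / (x + k) ^ 3) + h * (1 / (x + k) ^ 4) := by
          field_simp
  have hterm : ∀ k : ℕ, 1 / (x + k) ^ 2 - 1 / (x + h + k) ^ 2 =
      h * ((2 * (x + k) + h) / ((x + k) ^ 2 * (x + h + k) ^ 2)) := by
    intro k
    have h1 : (0:ℝ) < x + k := by positivity
    have h2 : (0:ℝ) < x + h + k := by positivity
    field_simp
    ring
  have hsub : Sf x - Sf (x + h) =
      h * ∑' k : ℕ, (2 * (x + k) + h) / ((x + k) ^ 2 * (x + h + k) ^ 2) := by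
    rw [Sf, Sf, ← Summable.tsum_sub (summable_S hx) (by
      have := summable_S (x := x + h) (by positivity)
      exact this), ← tsum_mul_left]
    exact tsum_congr hterm
  rw [div_eq_iff hh.ne']
  linarith [hsub]

lemma g_summable_bound {x h : ℝ} (hx : 0 < x) (hh : 0 < h) :
    Summable (fun k : ℕ => (2 * (x + k) + h) / ((x + k) ^ 2 * (x + h + k) ^ 2)) ∧
    ∑' k : ℕ, (2 * (x + k) + h) / ((x + k) ^ 2 * (x + h + k) ^ 2) ≤ 2 * Tf x + h * Uf x := by
  have hmaj : Summable (fun k : ℕ => 2 * (1 / (x + k) ^ 3) + h * (1 / (x + k) ^ 4)) :=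
    ((summable_T hx).mul_left 2).add ((summable_U hx).mul_left h)
  have hterm : ∀ k : ℕ, (2 * (x + k) + h) / ((x + k) ^ 2 * (x + h + k) ^ 2) ≤
      2 * (1 / (x + k) ^ 3) + h * (1 / (x + k) ^ 4) := by
    intro k
    have h1 : (0:ℝ) < x + k := by positivity
    have h2 : (x + (k:ℝ)) ^ 2 ≤ (x + h + k) ^ 2 := by nlinarith
    calc (2 * (x + k) + h) / ((x + k) ^ 2 * (x + h + k) ^ 2)
        ≤ (2 * (x + k) + h) / ((x + k) ^ 2 * (x + k) ^ 2) := by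
          refine div_le_div_of_nonneg_left (by positivity) (by positivity) ?_
          exact mul_le_mul_of_nonneg_left h2 (by positivity)
      _ = 2 * (1 / (x + k) ^ 3) + h * (1 / (x + k) ^ 4) := by
          field_simp
  have hsumm : Summable (fun k : ℕ => (2 * (x + k) + h) / ((x + k) ^ 2 * (x + h + k) ^ 2)) :=
    Summable.of_nonneg_of_le (fun k => by positivity) hterm hmaj
  refine ⟨hsumm, ?_⟩
  calc ∑' k : ℕ, (2 * (x + k) + h) / ((x + k) ^ 2 * (x + h + k) ^ 2)
      ≤ ∑' k : ℕ, (2 * (1 / (x + k) ^ 3) + h * (1 / (x + k) ^ 4)) :=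
        Summable.tsum_le_tsum hterm hsumm hmaj
    _ = 2 * Tf x + h * Uf x := by
        rw [Summable.tsum_add ((summable_T hx).mul_left 2) ((summable_U hx).mul_left h),
          tsum_mul_left, tsum_mul_left]
        rfl

lemma p2_ge {x : ℝ} (hx : 0 < x) : -2 * Tf x ≤ p2 x := by
  have h := (diff_p1 hx).hasDerivAt
  rw [hasDerivAt_iff_tendsto_slope] at h
  have h' : Tendsto (slope p1 x) (𝓝[>] x) (𝓝 (p2 x)) :=
    h.mono_left (nhdsWithin_mono x fun y hy => ne_of_gt hy)
  have hb : Tendsto (fun y : ℝ => -2 * Tf x - (y - x) * Uf x) (𝓝[>] x) (𝓝 (-2 * Tf x)) := by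
    have hc : ContinuousAt (fun y : ℝ => -2 * Tf x - (y - x) * Uf x) x := by fun_prop
    have := hc.tendsto.mono_left (nhdsWithin_le_nhds (s := Ioi x))
    simpa using this
  refine le_of_tendsto_of_tendsto hb h' ?_
  filter_upwards [self_mem_nhdsWithin] with y hy
  have hy' : x < y := hy
  obtain ⟨h0, rfl⟩ : ∃ h0, y = x + h0 := ⟨y - x, by ring⟩
  have hh : 0 < h0 := by linarith
  have hSrw : ∀ z : ℝ, 0 < z → p1 z = Sf z := fun z hz => p1_eq_S hz
  rw [slope_def_field, add_sub_cancel_left, hSrw _ (by positivity), hSrw _ hx, S_sub_S hx hh]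
  obtain ⟨hsumm, hle⟩ := g_summable_bound hx hh
  have : -(2 * Tf x + h0 * Uf x) ≤
      -∑' k : ℕ, (2 * (x + k) + h0) / ((x + k) ^ 2 * (x + h0 + k) ^ 2) := neg_le_neg hle
  linarith

/-- Lemma `psi-diff`: for every `x > 0`, `ψ₂(x) + ψ₁(x)² > 0`. -/
theorem polygamma_two_add_sq_polygamma_one_pos (x : ℝ) (hx : 0 < x) :
    0 < polygamma 2 x + polygamma 1 x ^ 2 := by
  have h1 : polygamma 1 x = p1 x := by
    simp only [polygamma, iteratedDeriv_succ, iteratedDeriv_zero]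
    rfl
  have h2 : polygamma 2 x = p2 x := by
    simp only [polygamma, iteratedDeriv_succ, iteratedDeriv_zero]
    rfl
  have hF := F_pos hx
  rw [Ff] at hF
  have hp2 := p2_ge hx
  rw [h1, h2, p1_eq_S hx]
  linarith
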